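/- Let λ > 0, ε ∈ [0,1], β ≥ 0, Δ_IN > 0, Δ_OUT > 0 be fixed real numbers, with Γ = 1 + ε(β-1), Δ_eff = (1-ε)Δ_IN + εΔ_OUT, Λ = 1 + Δ_eff + ε(β²-1). For α > 0 let m(α) = 2αΓ/(α + λ + t(α) + 1) and q(α) = 4α[αΓ²(p+t(α)-3) + Λ(p+t(α)+1)] / [(p+t(α)+1)(p² - 2c + t(α)² + 2t(α)(p+1) + 1)], where p = α + λ, c = α - λ, t(α) = √((p-1)² + 4λ). Define the excess generalisation error E(α) = 1 + ε(β²-1) + q(α) - 2m(α)Γ - ε(1-ε)(1-β)². Then α·E(α) tends to Δ_eff + ε(1-ε)(1-β)² as α → ∞. In particular E(α) → 0 at rate 1/α for every fixed λ > 0, i.e. ridge regression is consistent for the generalisation error with the Bayes-optimal rate. -/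

import Mathlib

open Filter

set_option maxHeartbeats 2000000

private lemma ridge_alg (a lam G L T : ℝ) (hT2 : T ^ 2 = (a + lam - 1) ^ 2 + 4 * lam)
    (h1 : T ≠ 0) (h2 : a + lam + T + 1 ≠ 0) (h3 : T + a + lam - 3 ≠ 0)
    (h4 : T + a + lam - 1 ≠ 0) :
    a * (G ^ 2 +
      4 * a * (a * G ^ 2 * (a + lam + T - 3) + L * (a + lam + T + 1)) /
        ((a + lam + T + 1) *
          ((a + lam) ^ 2 - 2 * (a - lam) + T ^ 2 + 2 * T * (a + lam + 1) + 1))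
      - 2 * (2 * a * G / (a + lam + T + 1)) * G)
    = G ^ 2 * ((2 * (2 * lam ^ 2 + 4 - 2 * (a + lam)) +
          8 * lam * (a + lam - 3) / (T + a + lam - 1)) * a
        / ((T + a + lam - 3) * (2 * T)))
      + L * (4 * a ^ 2 / ((T + a + lam + 1) * (2 * T))) := by
  have h5 : T + a + lam + 1 ≠ 0 := by intro h; apply h2; linarith
  have hbig : (a + lam) ^ 2 - 2 * (a - lam) + T ^ 2 + 2 * T * (a + lam + 1) + 1
      = 2 * T * (T + a + lam + 1) := by linear_combination -hT2
  rw [hbig]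
  have key1 : G ^ 2 +
      4 * a * (a * G ^ 2 * (a + lam + T - 3) + L * (a + lam + T + 1)) /
        ((a + lam + T + 1) * (2 * T * (T + a + lam + 1)))
      - 2 * (2 * a * G / (a + lam + T + 1)) * G
      = (G ^ 2 * (a * (a + lam - 3 - T) + 2 * T) + L * (a + lam + 1 - T)) / (2 * T) := by
    field_simp
    linear_combination (L * (a + lam + T + 1) + G ^ 2 * a * (a + lam + T - 3)) * hT2
  rw [key1]
  have key2 : a + lam + 1 - T = 4 * a / (T + a + lam + 1) := by
    rw [eq_div_iff (by intro h; apply h2; linarith)]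
    linear_combination -hT2
  have key3 : a * (a + lam - 3 - T) + 2 * T
      = (2 * (2 * lam ^ 2 + 4 - 2 * (a + lam)) +
          8 * lam * (a + lam - 3) / (T + a + lam - 1)) / (T + a + lam - 3) := by
    field_simp
    linear_combination (2*T - 2*a*T + (-8 + 4*lam + 5*a + a*T - a*lam - a^2)) * hT2
  rw [key2, key3]
  field_simp


/-- The excess generalisation error of ridge regression on the double-Gaussian
outlier model satisfies α·E(α) → Δ_eff + ε(1-ε)(1-β)² as α → ∞; in particular
E(α) → 0 at rate 1/α, i.e. ridge regression is consistent for the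
generalisation error with the Bayes-optimal rate. -/
theorem ridge_generalisation_error_consistent_with_BO_rate
    (lam ε β ΔIN ΔOUT : ℝ) (hlam : 0 < lam) (hε : ε ∈ Set.Icc (0 : ℝ) 1) (hβ : 0 ≤ β)
    (hIN : 0 < ΔIN) (hOUT : 0 < ΔOUT)
    (Γ Δeff Λ : ℝ)
    (hΓ : Γ = 1 + ε * (β - 1))
    (hΔeff : Δeff = (1 - ε) * ΔIN + ε * ΔOUT)
    (hΛ : Λ = 1 + Δeff + ε * (β ^ 2 - 1))
    (t m q E : ℝ → ℝ)
    (ht : ∀ α : ℝ, t α = Real.sqrt ((α + lam - 1) ^ 2 + 4 * lam))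
    (hm : ∀ α : ℝ, m α = 2 * α * Γ / (α + lam + t α + 1))
    (hq : ∀ α : ℝ, q α =
      4 * α * (α * Γ ^ 2 * (α + lam + t α - 3) + Λ * (α + lam + t α + 1)) /
        ((α + lam + t α + 1) *
          ((α + lam) ^ 2 - 2 * (α - lam) + (t α) ^ 2 + 2 * t α * (α + lam + 1) + 1)))
    (hE : ∀ α : ℝ, E α =
      1 + ε * (β ^ 2 - 1) + q α - 2 * m α * Γ - ε * (1 - ε) * (1 - β) ^ 2) :
    Tendsto (fun α : ℝ => α * E α) atTop (nhds (Δeff + ε * (1 - ε) * (1 - β) ^ 2)) ∧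
    Tendsto E atTop (nhds 0) := by
  have hinv : Tendsto (fun α : ℝ => α⁻¹) atTop (nhds 0) := tendsto_inv_atTop_zero
  have hTpos : ∀ α : ℝ, 0 < t α := by
    intro α
    rw [ht]
    exact Real.sqrt_pos.mpr (by positivity)
  -- limit of t α / α
  have hts : Tendsto (fun α : ℝ => t α / α) atTop (nhds 1) := by
    have hin : Tendsto (fun α : ℝ => (1 + (lam - 1) * α⁻¹) ^ 2 + 4 * lam * α⁻¹ ^ 2)
        atTop (nhds 1) := by
      have ha : Tendsto (fun α : ℝ => 1 + (lam - 1) * α⁻¹) atTop (nhds (1 + (lam - 1) * 0)) :=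
        tendsto_const_nhds.add (hinv.const_mul (lam - 1))
      have hb : Tendsto (fun α : ℝ => 4 * lam * α⁻¹ ^ 2) atTop (nhds (4 * lam * 0 ^ 2)) :=
        (hinv.pow 2).const_mul (4 * lam)
      have h1 := (ha.pow 2).add hb
      simpa using h1
    have hs := (Real.continuous_sqrt.tendsto 1).comp hin
    rw [Real.sqrt_one] at hs
    refine Tendsto.congr' ?_ hs
    filter_upwards [eventually_gt_atTop 0] with α hα
    have hrw : (1 + (lam - 1) * α⁻¹) ^ 2 + 4 * lam * α⁻¹ ^ 2
        = ((α + lam - 1) ^ 2 + 4 * lam) / α ^ 2 := by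
      field_simp
      ring
    simp only [Function.comp_apply]
    rw [hrw, ht α, Real.sqrt_div (by positivity) (α ^ 2), Real.sqrt_sq hα.le]
  have hTatTop : Tendsto (fun α : ℝ => t α + α + lam - 1) atTop atTop := by
    refine tendsto_atTop_mono (fun α => ?_)
      (tendsto_atTop_add_const_right atTop (lam - 1) tendsto_id)
    have := (hTpos α).le
    simp only [id_eq]
    linarith
  -- B limit
  have hB : Tendsto (fun α : ℝ => 4 * α ^ 2 / ((t α + α + lam + 1) * (2 * t α)))
      atTop (nhds 1) := by
    have hden : Tendsto (fun α : ℝ => (t α / α + (1 + (lam + 1) * α⁻¹)) * (2 * (t α / α)))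
        atTop (nhds ((1 + (1 + (lam + 1) * 0)) * (2 * 1))) :=
      (hts.add (tendsto_const_nhds.add (hinv.const_mul (lam + 1)))).mul (hts.const_mul 2)
    have h4 : Tendsto (fun α : ℝ => 4 / ((t α / α + (1 + (lam + 1) * α⁻¹)) * (2 * (t α / α))))
        atTop (nhds (4 / ((1 + (1 + (lam + 1) * 0)) * (2 * 1)))) :=
      tendsto_const_nhds.div hden (by norm_num)
    norm_num at h4
    refine Tendsto.congr' ?_ h4
    filter_upwards [eventually_gt_atTop 0] with α hα
    have hT1 := hTpos α
    have hs1 : (0:ℝ) < t α + α + lam + 1 := by linarith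
    field_simp
    ring
  -- A limit
  have hA : Tendsto (fun α : ℝ =>
      (2 * (2 * lam ^ 2 + 4 - 2 * (α + lam)) +
        8 * lam * (α + lam - 3) / (t α + α + lam - 1)) * α
        / ((t α + α + lam - 3) * (2 * t α))) atTop (nhds (-1)) := by
    have hnum : Tendsto (fun α : ℝ =>
        (4 * lam ^ 2 + 8 - 4 * lam) * α⁻¹ - 4 +
          8 * lam * (1 + (lam - 3) * α⁻¹) / (t α + α + lam - 1)) atTop (nhds (-4)) := by
      have h1 : Tendsto (fun α : ℝ => (4 * lam ^ 2 + 8 - 4 * lam) * α⁻¹)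
          atTop (nhds ((4 * lam ^ 2 + 8 - 4 * lam) * 0)) := hinv.const_mul _
      have h2 : Tendsto (fun α : ℝ => 8 * lam * (1 + (lam - 3) * α⁻¹))
          atTop (nhds (8 * lam * (1 + (lam - 3) * 0))) :=
        (tendsto_const_nhds.add (hinv.const_mul (lam - 3))).const_mul (8 * lam)
      have h3 := h2.div_atTop hTatTop
      have h5 := (h1.sub (tendsto_const_nhds (x := (4:ℝ)))).add h3
      simpa using h5
    have hden : Tendsto (fun α : ℝ => (t α / α + (1 + (lam - 3) * α⁻¹)) * (2 * (t α / α)))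
        atTop (nhds ((1 + (1 + (lam - 3) * 0)) * (2 * 1))) :=
      (hts.add (tendsto_const_nhds.add (hinv.const_mul (lam - 3)))).mul (hts.const_mul 2)
    have h4 := hnum.div hden (by norm_num)
    norm_num at h4
    refine Tendsto.congr' ?_ h4
    filter_upwards [eventually_ge_atTop 4] with α hα
    have hα0 : (0:ℝ) < α := by linarith
    have hT1 := hTpos α
    have hs3 : (0:ℝ) < t α + α + lam - 3 := by linarith
    have hs1 : (0:ℝ) < t α + α + lam - 1 := by linarith
    simp only [Pi.div_apply]
    have e1 : (t α / α + (1 + (lam - 3) * α⁻¹)) * (2 * (t α / α))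
        = ((t α + α + lam - 3) * (2 * t α)) / α ^ 2 := by
      field_simp
      ring
    have e2 : (4 * lam ^ 2 + 8 - 4 * lam) * α⁻¹ - 4 +
          8 * lam * (1 + (lam - 3) * α⁻¹) / (t α + α + lam - 1)
        = ((2 * (2 * lam ^ 2 + 4 - 2 * (α + lam)) +
            8 * lam * (α + lam - 3) / (t α + α + lam - 1)) * α) / α ^ 2 := by
      field_simp
      ring
    rw [e1, e2, div_div_div_cancel_right₀ (by positivity : (α:ℝ) ^ 2 ≠ 0)]
  -- main eventual equality
  have hΓsq : 1 + ε * (β ^ 2 - 1) - ε * (1 - ε) * (1 - β) ^ 2 = Γ ^ 2 := by rw [hΓ]; ring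
  have heq : (fun α : ℝ => Γ ^ 2 *
      ((2 * (2 * lam ^ 2 + 4 - 2 * (α + lam)) +
          8 * lam * (α + lam - 3) / (t α + α + lam - 1)) * α
        / ((t α + α + lam - 3) * (2 * t α)))
      + Λ * (4 * α ^ 2 / ((t α + α + lam + 1) * (2 * t α))))
      =ᶠ[atTop] (fun α : ℝ => α * E α) := by
    filter_upwards [eventually_ge_atTop 4] with α hα
    have hα0 : (0:ℝ) < α := by linarith
    have hT1 := hTpos α
    have hT2 : t α ^ 2 = (α + lam - 1) ^ 2 + 4 * lam := by
      rw [ht]; exact Real.sq_sqrt (by positivity)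
    have halg := ridge_alg α lam Γ Λ (t α) hT2 (hTpos α).ne'
      (by linarith : (0:ℝ) < α + lam + t α + 1).ne'
      (by linarith : (0:ℝ) < t α + α + lam - 3).ne'
      (by linarith : (0:ℝ) < t α + α + lam - 1).ne'
    rw [hE α, hq α, hm α]
    linear_combination -halg - α * hΓsq
  have hF := (hA.const_mul (Γ ^ 2)).add (hB.const_mul Λ)
  have hmain : Tendsto (fun α : ℝ => α * E α) atTop
      (nhds (Δeff + ε * (1 - ε) * (1 - β) ^ 2)) := by
    have hval : Γ ^ 2 * (-1) + Λ * 1 = Δeff + ε * (1 - ε) * (1 - β) ^ 2 := by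
      rw [hΛ, hΓ]; ring
    rw [← hval]
    exact Tendsto.congr' heq hF
  refine ⟨hmain, ?_⟩
  have h2 := hmain.mul hinv
  rw [mul_zero] at h2
  refine Tendsto.congr' ?_ h2
  filter_upwards [eventually_ne_atTop 0] with α hα
  rw [mul_comm α (E α), mul_assoc, mul_inv_cancel₀ hα, mul_one]
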